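/- Let d ≥ 1, w > 0, and let ν ∈ ℝ^d be a unit vector. Then ∫_{ℝ^d} ∂²₁G_w(z) · (ν·z)₊ dz = ν₁²/(2√(πw)), where ∂²₁G_w denotes the second partial derivative of G_w with respect to the first coordinate, ν₁ is the first component of ν, and (·)₊ denotes the positive part. -/

import Mathlib

open Real MeasureTheory
open scoped RealInnerProductSpace

/-- The `d`-dimensional heat kernel `G_t(z) = (4πt)^{-d/2} exp(-|z|²/(4t))`. -/
noncomputable def heatKE (d : ℕ) (t : ℝ) (z : EuclideanSpace ℝ (Fin d)) : ℝ :=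
  (4 * Real.pi * t) ^ (-(d : ℝ) / 2) * Real.exp (-‖z‖ ^ 2 / (4 * t))

section Stmt13Aux
open Filter Set

namespace S13


lemma integral_comp_neg_real (f : ℝ → ℝ) : ∫ x : ℝ, f (-x) = ∫ x : ℝ, f x := by
  have A : MeasurableEmbedding fun x : ℝ => -x :=
    (Homeomorph.neg ℝ).isClosedEmbedding.measurableEmbedding
  have := A.integral_map (μ := (volume : Measure ℝ)) f
  rw [Measure.map_neg_eq_self (volume : Measure ℝ)] at this
  simpa [Function.comp] using this.symm

lemma integral_odd_zero (f : ℝ → ℝ) (hf : ∀ x, f (-x) = - f x) : ∫ x : ℝ, f x = 0 := by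
  have h := integral_comp_neg_real f
  simp only [hf] at h
  rw [integral_neg] at h
  linarith

lemma integrable_pow_mul_exp {b : ℝ} (hb : 0 < b) (n : ℕ) :
    Integrable fun t : ℝ => t ^ n * Real.exp (-b * t ^ 2) := by
  have h := integrable_rpow_mul_exp_neg_mul_sq hb (s := (n : ℝ))
    (lt_of_lt_of_le neg_one_lt_zero (Nat.cast_nonneg n))
  simpa [Real.rpow_natCast] using h

lemma integrableOn_pow_mul_exp {b : ℝ} (hb : 0 < b) (n : ℕ) :
    IntegrableOn (fun t : ℝ => t ^ n * Real.exp (-b * t ^ 2)) (Ioi 0) :=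
  (integrable_pow_mul_exp hb n).integrableOn

lemma tendsto_pow_mul_exp_atTop {b : ℝ} (hb : 0 < b) (n : ℕ) :
    Tendsto (fun t : ℝ => t ^ n * Real.exp (-b * t ^ 2)) atTop (nhds 0) := by
  have h := rpow_mul_exp_neg_mul_sq_isLittleO_exp_neg hb (n : ℝ)
  have hexp : Tendsto (fun x : ℝ => Real.exp (-(1/2) * x)) atTop (nhds 0) := by
    apply Real.tendsto_exp_atBot.comp
    exact (tendsto_const_mul_atBot_of_neg (by norm_num)).mpr tendsto_id
  have h2 := h.tendsto_zero_of_tendsto hexp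
  refine h2.congr' ?_
  filter_upwards [eventually_gt_atTop (0:ℝ)] with t ht
  rw [Real.rpow_natCast]

-- H1
lemma integral_Ioi_pow1 {b : ℝ} (hb : 0 < b) :
    ∫ t in Ioi (0:ℝ), t * Real.exp (-b * t ^ 2) = 1 / (2 * b) := by
  have hderiv : ∀ t ∈ Ici (0:ℝ), HasDerivAt (fun t : ℝ => -(2*b)⁻¹ * Real.exp (-b * t ^ 2))
      (t * Real.exp (-b * t ^ 2)) t := by
    intro t _
    have := ((hasDerivAt_pow 2 t).const_mul (-b)).exp.const_mul (-(2*b)⁻¹)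
    refine this.congr_deriv ?_
    field_simp
    ring
  have hint : IntegrableOn (fun t : ℝ => t * Real.exp (-b * t ^ 2)) (Ioi 0) := by
    simpa using integrableOn_pow_mul_exp hb 1
  have htend : Tendsto (fun t : ℝ => -(2*b)⁻¹ * Real.exp (-b * t ^ 2)) atTop (nhds (-(2*b)⁻¹ * 0)) := by
    apply Tendsto.const_mul
    have := tendsto_pow_mul_exp_atTop hb 0
    simpa using this
  have := integral_Ioi_of_hasDerivAt_of_tendsto' hderiv hint htend
  rw [this]; simp


-- H2
lemma integral_Ioi_pow3 {b : ℝ} (hb : 0 < b) :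
    ∫ t in Ioi (0:ℝ), t ^ 3 * Real.exp (-b * t ^ 2) = 1 / (2 * b ^ 2) := by
  have hderiv : ∀ t ∈ Ici (0:ℝ), HasDerivAt
      (fun t : ℝ => -(t ^ 2 / (2*b) + 1/(2*b^2)) * Real.exp (-b * t ^ 2))
      (t ^ 3 * Real.exp (-b * t ^ 2)) t := by
    intro t _
    have h1 : HasDerivAt (fun t : ℝ => -(t ^ 2 / (2*b) + 1/(2*b^2))) (-(2 * t / (2*b))) t := by
      have := (((hasDerivAt_pow 2 t).div_const (2*b)).add_const (1/(2*b^2))).neg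
      simpa [Pi.neg_def] using this
    have h2 : HasDerivAt (fun t : ℝ => Real.exp (-b * t ^ 2)) (Real.exp (-b * t^2) * (-b * (2*t))) t := by
      have := ((hasDerivAt_pow 2 t).const_mul (-b)).exp
      simpa [mul_comm, mul_assoc, mul_left_comm] using this
    have := h1.mul h2
    refine this.congr_deriv ?_
    field_simp
    ring
  have hint : IntegrableOn (fun t : ℝ => t ^ 3 * Real.exp (-b * t ^ 2)) (Ioi 0) :=
    integrableOn_pow_mul_exp hb 3
  have htend : Tendsto (fun t : ℝ => -(t ^ 2 / (2*b) + 1/(2*b^2)) * Real.exp (-b * t ^ 2))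
      atTop (nhds 0) := by
    have h2 := tendsto_pow_mul_exp_atTop hb 2
    have h0 := tendsto_pow_mul_exp_atTop hb 0
    have : Tendsto (fun t : ℝ => -((1/(2*b)) * (t^2 * Real.exp (-b * t^2)) + (1/(2*b^2)) * (1 * Real.exp (-b * t^2)))) atTop (nhds (-((1/(2*b)) * 0 + (1/(2*b^2)) * 0))) := by
      exact ((h2.const_mul _).add ((h0.congr (by intro t; simp)).const_mul _)).neg
    simp only [mul_zero, add_zero, neg_zero] at this
    refine this.congr (fun t => ?_)
    ring
  have := integral_Ioi_of_hasDerivAt_of_tendsto' hderiv hint htend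
  rw [this]; simp

-- H3
lemma integral_Ioi_pow2 {b : ℝ} (hb : 0 < b) :
    ∫ t in Ioi (0:ℝ), t ^ 2 * Real.exp (-b * t ^ 2) = Real.sqrt (π / b) / (4 * b) := by
  have key : ∫ t in Ioi (0:ℝ), (t ^ 2 * Real.exp (-b * t ^ 2) - (1/(2*b)) * Real.exp (-b * t ^ 2)) = 0 := by
    have hderiv : ∀ t ∈ Ici (0:ℝ), HasDerivAt (fun t : ℝ => -(t/(2*b)) * Real.exp (-b * t ^ 2))
        (t ^ 2 * Real.exp (-b * t ^ 2) - (1/(2*b)) * Real.exp (-b * t ^ 2)) t := by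
      intro t _
      have h1 : HasDerivAt (fun t : ℝ => -(t/(2*b))) (-(1/(2*b))) t := by
        simpa [Pi.neg_def] using ((hasDerivAt_id t).div_const (2*b)).neg
      have h2 : HasDerivAt (fun t : ℝ => Real.exp (-b * t ^ 2)) (Real.exp (-b * t^2) * (-b * (2*t))) t := by
        have := ((hasDerivAt_pow 2 t).const_mul (-b)).exp
        simpa [mul_comm, mul_assoc, mul_left_comm] using this
      have := h1.mul h2
      refine this.congr_deriv ?_
      field_simp
      ring
    have hint : IntegrableOn (fun t : ℝ => t ^ 2 * Real.exp (-b * t ^ 2) - (1/(2*b)) * Real.exp (-b * t ^ 2)) (Ioi 0) := by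
      apply Integrable.sub (integrableOn_pow_mul_exp hb 2)
      exact ((integrable_exp_neg_mul_sq hb).const_mul (1/(2*b))).integrableOn
    have htend : Tendsto (fun t : ℝ => -(t/(2*b)) * Real.exp (-b * t ^ 2)) atTop (nhds 0) := by
      have h1 := tendsto_pow_mul_exp_atTop hb 1
      have : Tendsto (fun t : ℝ => -(1/(2*b)) * (t^1 * Real.exp (-b * t^2))) atTop (nhds (-(1/(2*b)) * 0)) := h1.const_mul _
      simp only [mul_zero] at this
      refine this.congr (fun t => ?_)
      ring
    have := integral_Ioi_of_hasDerivAt_of_tendsto' hderiv hint htend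
    simpa using this
  have hsplit : ∫ t in Ioi (0:ℝ), (t ^ 2 * Real.exp (-b * t ^ 2) - (1/(2*b)) * Real.exp (-b * t ^ 2))
      = (∫ t in Ioi (0:ℝ), t ^ 2 * Real.exp (-b * t ^ 2)) - (1/(2*b)) * ∫ t in Ioi (0:ℝ), Real.exp (-b * t ^ 2) := by
    rw [integral_sub (integrableOn_pow_mul_exp hb 2)]
    · rw [integral_const_mul]
    · exact (integrable_exp_neg_mul_sq hb).integrableOn.const_mul _
  rw [hsplit, integral_gaussian_Ioi b] at key
  have : (∫ t in Ioi (0:ℝ), t ^ 2 * Real.exp (-b * t ^ 2)) = (1/(2*b)) * (Real.sqrt (π / b) / 2) := by linarith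
  rw [this]; ring


lemma max_eq_half (t : ℝ) : max t 0 = (t + |t|) / 2 := by
  rcases le_total 0 t with h | h
  · rw [max_eq_left h, abs_of_nonneg h]; ring
  · rw [max_eq_right h, abs_of_nonpos h]; ring

lemma integrable_abs_pow_mul_exp {b : ℝ} (hb : 0 < b) (n : ℕ) :
    Integrable fun t : ℝ => |t| ^ n * Real.exp (-b * t ^ 2) := by
  refine (integrable_pow_mul_exp hb n).abs.congr (Eventually.of_forall fun t => ?_)
  simp [abs_mul, abs_pow, abs_of_nonneg (Real.exp_nonneg _)]

lemma integrable_pow_mul_max_mul_exp {b : ℝ} (hb : 0 < b) (n : ℕ) :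
    Integrable fun t : ℝ => t ^ n * max t 0 * Real.exp (-b * t ^ 2) := by
  refine Integrable.mono' (integrable_abs_pow_mul_exp hb (n+1)) ?_ (Eventually.of_forall fun t => ?_)
  · exact (((continuous_pow n).mul (continuous_id.max continuous_const)).mul
      (Real.continuous_exp.comp (by continuity))).aestronglyMeasurable
  · rw [Real.norm_eq_abs, abs_mul, abs_mul, abs_of_nonneg (Real.exp_nonneg _), abs_pow]
    have h1 : |max t 0| ≤ |t| := by
      rw [abs_of_nonneg (le_max_right t 0)]
      exact max_le (le_abs_self t) (abs_nonneg t)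
    have h0 : (0:ℝ) ≤ |t| ^ n := by positivity
    have key : |t| ^ n * |max t 0| ≤ |t| ^ (n+1) := by
      rw [pow_succ]
      exact mul_le_mul_of_nonneg_left h1 h0
    exact mul_le_mul_of_nonneg_right key (Real.exp_nonneg _)

-- M1 and odd friends
lemma integral_odd_pow_mul_exp {b : ℝ} (n : ℕ) (hn : Odd n) :
    ∫ t : ℝ, t ^ n * Real.exp (-b * t ^ 2) = 0 := by
  refine integral_odd_zero _ fun t => ?_
  rw [hn.neg_pow]
  ring_nf

lemma integral_mul_abs_mul_exp_odd {b : ℝ} :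
    ∫ t : ℝ, t * |t| * Real.exp (-b * t ^ 2) = 0 := by
  refine integral_odd_zero _ fun t => ?_
  rw [abs_neg]
  ring_nf

-- M2
lemma integral_sq_mul_exp {b : ℝ} (hb : 0 < b) :
    ∫ t : ℝ, t ^ 2 * Real.exp (-b * t ^ 2) = Real.sqrt (π / b) / (2 * b) := by
  have h := integral_comp_abs (f := fun t : ℝ => t ^ 2 * Real.exp (-b * t ^ 2))
  rw [integral_Ioi_pow2 hb] at h
  have : (fun x : ℝ => |x| ^ 2 * Real.exp (-b * |x| ^ 2)) = fun x : ℝ => x ^ 2 * Real.exp (-b * x ^ 2) := by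
    funext x; rw [sq_abs]
  rw [this] at h
  rw [h]; ring

-- abs moments
lemma integral_abs_mul_exp {b : ℝ} (hb : 0 < b) :
    ∫ t : ℝ, |t| * Real.exp (-b * t ^ 2) = 1 / b := by
  have h := integral_comp_abs (f := fun t : ℝ => t * Real.exp (-b * t ^ 2))
  rw [integral_Ioi_pow1 hb] at h
  have : (fun x : ℝ => |x| * Real.exp (-b * |x| ^ 2)) = fun x : ℝ => |x| * Real.exp (-b * x ^ 2) := by
    funext x; rw [sq_abs]
  rw [this] at h
  rw [h]; field_simp

lemma integral_sq_abs_mul_exp {b : ℝ} (hb : 0 < b) :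
    ∫ t : ℝ, t ^ 2 * |t| * Real.exp (-b * t ^ 2) = 1 / b ^ 2 := by
  have h := integral_comp_abs (f := fun t : ℝ => t ^ 3 * Real.exp (-b * t ^ 2))
  rw [integral_Ioi_pow3 hb] at h
  have : (fun x : ℝ => |x| ^ 3 * Real.exp (-b * |x| ^ 2)) = fun x : ℝ => x ^ 2 * |x| * Real.exp (-b * x ^ 2) := by
    funext x; rw [sq_abs, pow_succ, sq_abs]
  rw [this] at h
  rw [h]; field_simp

-- M3
lemma integral_max_mul_exp {b : ℝ} (hb : 0 < b) :
    ∫ t : ℝ, max t 0 * Real.exp (-b * t ^ 2) = 1 / (2 * b) := by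
  have heq : (fun t : ℝ => max t 0 * Real.exp (-b * t ^ 2))
      = fun t : ℝ => (1/2) * (t * Real.exp (-b * t ^ 2)) + (1/2) * (|t| * Real.exp (-b * t ^ 2)) := by
    funext t; rw [max_eq_half]; ring
  have i1 : Integrable fun t : ℝ => t * Real.exp (-b * t ^ 2) := by
    simpa using integrable_pow_mul_exp hb 1
  have i2 : Integrable fun t : ℝ => |t| * Real.exp (-b * t ^ 2) := by
    simpa using integrable_abs_pow_mul_exp hb 1
  rw [heq, integral_add (i1.const_mul _) (i2.const_mul _), integral_const_mul, integral_const_mul]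
  have h1 : ∫ t : ℝ, t * Real.exp (-b * t ^ 2) = 0 := by
    simpa using integral_odd_pow_mul_exp (b := b) 1 ⟨0, by norm_num⟩
  rw [h1, integral_abs_mul_exp hb]
  field_simp; ring

-- M4
lemma integral_mul_max_mul_exp {b : ℝ} (hb : 0 < b) :
    ∫ t : ℝ, t * max t 0 * Real.exp (-b * t ^ 2) = Real.sqrt (π / b) / (4 * b) := by
  have heq : (fun t : ℝ => t * max t 0 * Real.exp (-b * t ^ 2))
      = fun t : ℝ => (1/2) * (t ^ 2 * Real.exp (-b * t ^ 2)) + (1/2) * (t * |t| * Real.exp (-b * t ^ 2)) := by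
    funext t; rw [max_eq_half]; ring
  have i2 : Integrable fun t : ℝ => t * |t| * Real.exp (-b * t ^ 2) := by
    refine (integrable_abs_pow_mul_exp hb 2).mono'
      (((continuous_id.mul continuous_abs).mul (Real.continuous_exp.comp (by continuity))).aestronglyMeasurable)
      (Eventually.of_forall fun t => ?_)
    rw [Real.norm_eq_abs, abs_mul, abs_mul, abs_of_nonneg (Real.exp_nonneg _), abs_abs]
    have h : |t| * |t| = |t| ^ 2 := by ring
    rw [h]
  rw [heq, integral_add ((integrable_pow_mul_exp hb 2).const_mul _) (i2.const_mul _),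
    integral_const_mul, integral_const_mul, integral_sq_mul_exp hb, integral_mul_abs_mul_exp_odd]
  ring

-- M5
lemma integral_sq_mul_max_mul_exp {b : ℝ} (hb : 0 < b) :
    ∫ t : ℝ, t ^ 2 * max t 0 * Real.exp (-b * t ^ 2) = 1 / (2 * b ^ 2) := by
  have heq : (fun t : ℝ => t ^ 2 * max t 0 * Real.exp (-b * t ^ 2))
      = fun t : ℝ => (1/2) * (t ^ 3 * Real.exp (-b * t ^ 2)) + (1/2) * (t ^ 2 * |t| * Real.exp (-b * t ^ 2)) := by
    funext t; rw [max_eq_half]; ring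
  have i2 : Integrable fun t : ℝ => t ^ 2 * |t| * Real.exp (-b * t ^ 2) := by
    refine (integrable_abs_pow_mul_exp hb 3).congr (Eventually.of_forall fun t => ?_)
    simp only
    rw [pow_succ, sq_abs]
  rw [heq, integral_add ((integrable_pow_mul_exp hb 3).const_mul _) (i2.const_mul _),
    integral_const_mul, integral_const_mul, integral_odd_pow_mul_exp 3 ⟨1, by norm_num⟩,
    integral_sq_abs_mul_exp hb]
  ring



lemma hasFDerivAt_heatKE (d : ℕ) {w : ℝ} (hw : 0 < w) (y : EuclideanSpace ℝ (Fin d)) :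
    HasFDerivAt (heatKE d w)
      ((-(2*w)⁻¹ * heatKE d w y) • (innerSL ℝ y : EuclideanSpace ℝ (Fin d) →L[ℝ] ℝ)) y := by
  have h1 : HasFDerivAt (fun z : EuclideanSpace ℝ (Fin d) => ‖z‖ ^ 2)
      ((2:ℝ) • (innerSL ℝ y : EuclideanSpace ℝ (Fin d) →L[ℝ] ℝ)) y := by
    have := (hasFDerivAt_id y).norm_sq
    simp only [ContinuousLinearMap.comp_id, id] at this
    refine this.congr_fderiv ?_
    ext v
    simp
  have h2 := ((h1.const_mul (-(4*w)⁻¹)).exp).const_mul ((4 * Real.pi * w) ^ (-(d : ℝ) / 2))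
  have hfun : (fun z : EuclideanSpace ℝ (Fin d) =>
      (4 * Real.pi * w) ^ (-(d : ℝ) / 2) * Real.exp (-(4*w)⁻¹ * ‖z‖ ^ 2)) = heatKE d w := by
    funext z
    unfold heatKE
    congr 1
    congr 1
    ring
  rw [hfun] at h2
  refine h2.congr_fderiv ?_
  ext v
  simp only [ContinuousLinearMap.coe_smul', Pi.smul_apply, smul_eq_mul, heatKE]
  rw [show -(4*w)⁻¹ * ‖y‖^2 = -‖y‖^2/(4*w) by ring]
  ring

lemma fderiv2_heatKE (d : ℕ) {w : ℝ} (hw : 0 < w) (e z : EuclideanSpace ℝ (Fin d))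
    (he : ‖e‖ = 1) :
    (fderiv ℝ (fun y => fderiv ℝ (heatKE d w) y e) z) e
      = (⟪z, e⟫ ^ 2 / (4 * w ^ 2) - 1 / (2 * w)) * heatKE d w z := by
  have hfe : (fun y => fderiv ℝ (heatKE d w) y e)
      = fun y => (-(2*w)⁻¹) * (heatKE d w y * ⟪e, y⟫) := by
    funext y
    rw [(hasFDerivAt_heatKE d hw y).fderiv]
    simp only [ContinuousLinearMap.coe_smul', Pi.smul_apply, smul_eq_mul, innerSL_apply_apply]
    rw [real_inner_comm]
    ring
  rw [hfe]
  have h1 : HasFDerivAt (fun y : EuclideanSpace ℝ (Fin d) => heatKE d w y * ⟪e, y⟫)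
      (heatKE d w z • (innerSL ℝ e : EuclideanSpace ℝ (Fin d) →L[ℝ] ℝ)
        + ⟪e, z⟫ • ((-(2*w)⁻¹ * heatKE d w z) • (innerSL ℝ z : EuclideanSpace ℝ (Fin d) →L[ℝ] ℝ))) z := by
    exact (hasFDerivAt_heatKE d hw z).mul' ((innerSL ℝ e).hasFDerivAt) |>.congr_fderiv (by ext v; simp)
  have h2 := h1.const_mul (-(2*w)⁻¹)
  rw [h2.fderiv]
  simp only [ContinuousLinearMap.coe_smul', Pi.smul_apply, smul_eq_mul,
    ContinuousLinearMap.add_apply, innerSL_apply_apply]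
  have hee : ⟪e, e⟫ = 1 := by
    rw [real_inner_self_eq_norm_sq, he]; norm_num
  rw [hee, real_inner_comm z e]
  ring



noncomputable def gA (w : ℝ) : ℝ := (4 * π * w) ^ (-(1:ℝ)/2)

noncomputable def g1 (w t : ℝ) : ℝ := gA w * Real.exp (-(4*w)⁻¹ * t ^ 2)

variable {w : ℝ}

lemma hb4 (hw : 0 < w) : (0:ℝ) < (4*w)⁻¹ := by positivity

lemma gA_pos (hw : 0 < w) : 0 < gA w := by
  unfold gA; positivity

lemma sqrt_pi_div (hw : 0 < w) : Real.sqrt (π / (4*w)⁻¹) = 2 * Real.sqrt (π * w) := by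
  rw [div_inv_eq_mul]
  rw [show π * (4*w) = 4 * (π * w) by ring]
  rw [show (4:ℝ) * (π * w) = 2^2 * (π*w) by norm_num]
  rw [Real.sqrt_mul (by positivity), Real.sqrt_sq (by norm_num)]

lemma gA_eq (hw : 0 < w) : gA w = 1 / (2 * Real.sqrt (π * w)) := by
  unfold gA
  rw [show -(1:ℝ)/2 = -(1/2) by ring, Real.rpow_neg (by positivity), ← Real.sqrt_eq_rpow]
  rw [show (4:ℝ) * π * w = 2^2 * (π*w) by ring, Real.sqrt_mul (by positivity),
    Real.sqrt_sq (by norm_num)]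
  rw [one_div]

lemma gA_mul_sqrt (hw : 0 < w) : gA w * Real.sqrt (π / (4*w)⁻¹) = 1 := by
  rw [sqrt_pi_div hw, gA_eq hw]
  have : Real.sqrt (π * w) ≠ 0 := by positivity
  field_simp


lemma vg0 (hw : 0 < w) : ∫ t : ℝ, g1 w t = 1 := by
  unfold g1
  rw [integral_const_mul, integral_gaussian]
  exact gA_mul_sqrt hw

lemma vg1 (hw : 0 < w) : ∫ t : ℝ, t * g1 w t = 0 := by
  have : (fun t : ℝ => t * g1 w t) = fun t => gA w * (t ^ 1 * Real.exp (-(4*w)⁻¹ * t ^ 2)) := by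
    funext t; unfold g1; ring
  rw [this, integral_const_mul, integral_odd_pow_mul_exp 1 ⟨0, by norm_num⟩, mul_zero]

lemma vg2 (hw : 0 < w) : ∫ t : ℝ, t ^ 2 * g1 w t = 2 * w := by
  have : (fun t : ℝ => t ^ 2 * g1 w t) = fun t => gA w * (t ^ 2 * Real.exp (-(4*w)⁻¹ * t ^ 2)) := by
    funext t; unfold g1; ring
  rw [this, integral_const_mul, integral_sq_mul_exp (hb4 hw)]
  have h := gA_mul_sqrt hw
  have : gA w * (Real.sqrt (π / (4*w)⁻¹) / (2 * (4*w)⁻¹)) = (gA w * Real.sqrt (π / (4*w)⁻¹)) * (2*w) := by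
    field_simp; ring
  rw [this, h, one_mul]

lemma vm0 (hw : 0 < w) : ∫ t : ℝ, max t 0 * g1 w t = 2 * w * gA w := by
  have : (fun t : ℝ => max t 0 * g1 w t) = fun t => gA w * (max t 0 * Real.exp (-(4*w)⁻¹ * t ^ 2)) := by
    funext t; unfold g1; ring
  rw [this, integral_const_mul, integral_max_mul_exp (hb4 hw)]
  field_simp; ring

lemma vm1 (hw : 0 < w) : ∫ t : ℝ, t * max t 0 * g1 w t = w := by
  have : (fun t : ℝ => t * max t 0 * g1 w t) = fun t => gA w * (t * max t 0 * Real.exp (-(4*w)⁻¹ * t ^ 2)) := by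
    funext t; unfold g1; ring
  rw [this, integral_const_mul, integral_mul_max_mul_exp (hb4 hw)]
  have h := gA_mul_sqrt hw
  have : gA w * (Real.sqrt (π / (4*w)⁻¹) / (4 * (4*w)⁻¹)) = (gA w * Real.sqrt (π / (4*w)⁻¹)) * w := by
    field_simp
  rw [this, h, one_mul]

lemma vm2 (hw : 0 < w) : ∫ t : ℝ, t ^ 2 * max t 0 * g1 w t = 8 * w ^ 2 * gA w := by
  have : (fun t : ℝ => t ^ 2 * max t 0 * g1 w t) = fun t => gA w * (t ^ 2 * max t 0 * Real.exp (-(4*w)⁻¹ * t ^ 2)) := by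
    funext t; unfold g1; ring
  rw [this, integral_const_mul, integral_sq_mul_max_mul_exp (hb4 hw)]
  field_simp; ring



section q

variable {d : ℕ} (w : ℝ) (i0 : Fin d)

/-- the 1D factor of the product decomposition -/
noncomputable def q (i j k : Fin d) (t : ℝ) : ℝ :=
  (if k = i then t else 1) * (if k = j then t else 1) * (if k = i0 then max t 0 else 1) * g1 w t

lemma integrable_q (hw : 0 < w) (i j k : Fin d) : Integrable (q w i0 i j k) := by
  unfold q g1
  split_ifs with h1 h2 h3 h2 h3 h3 h3
  · exact ((integrable_pow_mul_max_mul_exp (hb4 hw) 2).const_mul (gA w)).congr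
      (Eventually.of_forall fun t => by simp only; ring)
  · exact ((integrable_pow_mul_exp (hb4 hw) 2).const_mul (gA w)).congr
      (Eventually.of_forall fun t => by simp only; ring)
  · exact ((integrable_pow_mul_max_mul_exp (hb4 hw) 1).const_mul (gA w)).congr
      (Eventually.of_forall fun t => by simp only; ring)
  · exact ((integrable_pow_mul_exp (hb4 hw) 1).const_mul (gA w)).congr
      (Eventually.of_forall fun t => by simp only; ring)
  · exact ((integrable_pow_mul_max_mul_exp (hb4 hw) 1).const_mul (gA w)).congr
      (Eventually.of_forall fun t => by simp only; ring)
  · exact ((integrable_pow_mul_exp (hb4 hw) 1).const_mul (gA w)).congr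
      (Eventually.of_forall fun t => by simp only; ring)
  · exact ((integrable_pow_mul_max_mul_exp (hb4 hw) 0).const_mul (gA w)).congr
      (Eventually.of_forall fun t => by simp only; ring)
  · exact ((integrable_pow_mul_exp (hb4 hw) 0).const_mul (gA w)).congr
      (Eventually.of_forall fun t => by simp only; ring)

lemma integrable_q0 (hw : 0 < w) (k : Fin d) :
    Integrable (fun t => (if k = i0 then max t 0 else 1) * g1 w t) := by
  have := integrable_q w i0 hw i0 i0 k   -- not directly; just redo
  unfold g1
  split_ifs with h
  · exact ((integrable_pow_mul_max_mul_exp (hb4 hw) 0).const_mul (gA w)).congr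
      (Eventually.of_forall fun t => by simp only; ring)
  · exact ((integrable_pow_mul_exp (hb4 hw) 0).const_mul (gA w)).congr
      (Eventually.of_forall fun t => by simp only; ring)


variable [DecidableEq (Fin d)]

lemma intq_one (hw : 0 < w) {i j k : Fin d} (hki : k ≠ i) (hkj : k ≠ j) (hk0 : k ≠ i0) :
    ∫ t : ℝ, q w i0 i j k t = 1 := by
  have : q w i0 i j k = g1 w := by
    funext t; unfold q; split_ifs <;> (first | ring1 | (exfalso; simp_all))
  rw [this]; exact vg0 hw

lemma F_eq (hw : 0 < w) (i j : Fin d) :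
    ∏ k, (∫ t : ℝ, q w i0 i j k t)
      = if i = j then (if i = i0 then 8*w^2*gA w else 4*w^2*gA w) else 0 := by
  by_cases hij : i = j
  · subst hij
    rw [if_pos rfl]
    by_cases hi : i = i0
    · subst hi
      rw [if_pos rfl]
      rw [Finset.prod_eq_single i (fun k _ hk => intq_one w _ hw hk hk hk)
        (fun h => absurd (Finset.mem_univ i) h)]
      have : q w i i i i = fun t => t ^ 2 * max t 0 * g1 w t := by
        funext t; unfold q; split_ifs <;> (first | ring1 | (exfalso; simp_all))
      rw [this, vm2 hw]
    · rw [if_neg hi]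
      have h1 : ∫ t : ℝ, q w i0 i i i t = 2 * w := by
        have : q w i0 i i i = fun t => t ^ 2 * g1 w t := by
          funext t; unfold q; split_ifs <;> (first | ring1 | (exfalso; simp_all))
        rw [this]; exact vg2 hw
      have h2 : ∫ t : ℝ, q w i0 i i i0 t = 2 * w * gA w := by
        have : q w i0 i i i0 = fun t => max t 0 * g1 w t := by
          funext t; unfold q
          split_ifs <;> (first | ring1 | (exfalso; simp_all))
        rw [this]; exact vm0 hw
      rw [← Finset.mul_prod_erase Finset.univ _ (Finset.mem_univ i), h1]
      have hmem : i0 ∈ Finset.univ.erase i :=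
        Finset.mem_erase.mpr ⟨fun h => hi h.symm, Finset.mem_univ i0⟩
      rw [← Finset.mul_prod_erase _ _ hmem, h2]
      rw [Finset.prod_eq_one (fun k hk => ?_)]
      · ring
      · obtain ⟨hk0, hk'⟩ := Finset.mem_erase.mp hk
        obtain ⟨hki, _⟩ := Finset.mem_erase.mp hk'
        exact intq_one w _ hw hki hki hk0
  · rw [if_neg hij]
    by_cases hi : i = i0
    · have hj : j ≠ i0 := fun h => hij (hi.trans h.symm)
      refine Finset.prod_eq_zero (Finset.mem_univ j) ?_
      have : q w i0 i j j = fun t => t * g1 w t := by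
        funext t; unfold q; split_ifs <;> (first | ring1 | (exfalso; simp_all))
      rw [this]; exact vg1 hw
    · refine Finset.prod_eq_zero (Finset.mem_univ i) ?_
      have : q w i0 i j i = fun t => t * g1 w t := by
        funext t; unfold q; split_ifs <;> (first | ring1 | (exfalso; simp_all))
      rw [this]; exact vg1 hw

lemma F0_eq (hw : 0 < w) :
    ∏ k, (∫ t : ℝ, (if k = i0 then max t 0 else 1) * g1 w t) = 2 * w * gA w := by
  rw [Finset.prod_eq_single i0 (fun k _ hk => ?_) (fun h => absurd (Finset.mem_univ i0) h)]
  · rw [show (fun t : ℝ => (if i0 = i0 then max t 0 else 1) * g1 w t) = fun t => max t 0 * g1 w t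
      from funext fun t => by rw [if_pos rfl]]
    exact vm0 hw
  · rw [show (fun t : ℝ => (if k = i0 then max t 0 else 1) * g1 w t) = g1 w
      from funext fun t => by rw [if_neg hk]; ring]
    exact vg0 hw

end q


lemma hq_prod (i0 i j : Fin d) (x : Fin d → ℝ) :
    (∏ k, q w i0 i j k (x k)) = x i * x j * (max (x i0) 0 * ∏ k, g1 w (x k)) := by
  unfold q
  rw [Finset.prod_mul_distrib, Finset.prod_mul_distrib, Finset.prod_mul_distrib,
    Finset.prod_ite_eq', Finset.prod_ite_eq', Finset.prod_ite_eq']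
  simp only [Finset.mem_univ, if_true]
  ring

lemma hq0_prod (i0 : Fin d) (x : Fin d → ℝ) :
    (∏ k, (if k = i0 then max (x k) 0 else 1) * g1 w (x k))
      = max (x i0) 0 * ∏ k, g1 w (x k) := by
  rw [Finset.prod_mul_distrib, Finset.prod_ite_eq']
  simp only [Finset.mem_univ, if_true]

lemma pi_integral (d : ℕ) (i0 : Fin d) (hw : 0 < w) (u : Fin d → ℝ)
    (hu : ∑ k, u k ^ 2 = 1) :
    ∫ x : Fin d → ℝ,
        ((∑ k, u k * x k) ^ 2 / (4 * w ^ 2) - 1 / (2 * w))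
          * ((∏ k, g1 w (x k)) * max (x i0) 0)
      = (u i0) ^ 2 * gA w := by
  classical
  have hw4 : (4 : ℝ) * w ^ 2 ≠ 0 := by positivity
  have hkey : (fun x : Fin d → ℝ =>
      ((∑ k, u k * x k) ^ 2 / (4 * w ^ 2) - 1 / (2 * w))
        * ((∏ k, g1 w (x k)) * max (x i0) 0))
      = fun x => (∑ i, ∑ j, (u i * u j / (4 * w ^ 2)) * ∏ k, q w i0 i j k (x k))
        + (-(1/(2*w))) * ∏ k, ((if k = i0 then max (x k) 0 else 1) * g1 w (x k)) := by
    funext x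
    rw [hq0_prod]
    simp only [hq_prod]
    set M := max (x i0) 0 * ∏ k, g1 w (x k) with hM
    have h1 : ∑ i, ∑ j, (u i * u j / (4 * w ^ 2)) * (x i * x j * M)
        = (∑ i, ∑ j, (u i * x i) * (u j * x j)) * (M / (4 * w ^ 2)) := by
      rw [Finset.sum_mul]
      refine Finset.sum_congr rfl fun i _ => ?_
      rw [Finset.sum_mul]
      refine Finset.sum_congr rfl fun j _ => ?_
      ring
    have h2 : (∑ k, u k * x k) ^ 2 = ∑ i, ∑ j, (u i * x i) * (u j * x j) := by
      rw [sq, Finset.sum_mul_sum]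
    rw [h1, ← h2, hM]
    ring
  rw [hkey]
  have hint2 : Integrable (fun x : Fin d → ℝ =>
      ∏ k, ((if k = i0 then max (x k) 0 else 1) * g1 w (x k))) :=
    Integrable.fintype_prod (f := fun k t => (if k = i0 then max t 0 else 1) * g1 w t)
      (fun k => integrable_q0 w i0 hw k)
  have hint1 : ∀ i j : Fin d, Integrable (fun x : Fin d → ℝ =>
      (u i * u j / (4 * w ^ 2)) * ∏ k, q w i0 i j k (x k)) := fun i j =>
    (Integrable.fintype_prod (f := fun k => q w i0 i j k) (fun k => integrable_q w i0 hw i j k)).const_mul _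
  rw [integral_add (integrable_finset_sum _ fun i _ => integrable_finset_sum _ fun j _ => hint1 i j)
    (hint2.const_mul _), integral_finset_sum _ (fun i _ => integrable_finset_sum _ fun j _ => hint1 i j)]
  simp_rw [integral_finset_sum _ (fun j _ => hint1 _ j), integral_const_mul,
    MeasureTheory.integral_fintype_prod_volume_eq_prod (f := fun k => q w i0 _ _ k),
    MeasureTheory.integral_fintype_prod_volume_eq_prod (f := fun k t => (if k = i0 then max t 0 else 1) * g1 w t)]
  rw [F0_eq w i0 hw]
  have hFs : ∀ i j : Fin d, u i * u j / (4 * w ^ 2) * (∏ k, (∫ t : ℝ, q w i0 i j k t))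
      = if i = j then (u i * u j / (4 * w ^ 2)) * (if i = i0 then 8*w^2*gA w else 4*w^2*gA w) else 0 := by
    intro i j
    rw [F_eq w i0 hw i j]
    split_ifs with h1 h2 <;> simp
  simp_rw [hFs]
  simp only [Finset.sum_ite_eq, Finset.mem_univ, if_true]
  have hterm : ∀ i : Fin d, u i * u i / (4 * w ^ 2) * (if i = i0 then 8*w^2*gA w else 4*w^2*gA w)
      = u i ^ 2 * gA w + (if i = i0 then u i ^ 2 * gA w else 0) := by
    intro i
    split_ifs with h
    · field_simp; ring
    · field_simp; ring
  simp_rw [hterm]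
  rw [Finset.sum_add_distrib, ← Finset.sum_mul, hu, Finset.sum_ite_eq' Finset.univ i0
    (fun i => u i ^ 2 * gA w)]
  simp only [Finset.mem_univ, if_true, one_mul]
  field_simp
  ring

lemma gA_pow {w : ℝ} (hw : 0 < w) (d : ℕ) : gA w ^ d = (4 * π * w) ^ (-(d:ℝ)/2) := by
  unfold gA
  rw [← Real.rpow_natCast ((4 * π * w) ^ (-(1:ℝ)/2)) d, ← Real.rpow_mul (by positivity)]
  congr 1
  ring

end S13

end Stmt13Aux

open Filter Set in
/-- `∫ ∂²₁G_w(z)·(ν·z)₊ dz = ν₁²/(2√(πw))` for a unit vector `ν`. -/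
theorem stmt_13 (d : ℕ) (hd : 1 ≤ d) (w : ℝ) (hw : 0 < w)
    (ν : EuclideanSpace ℝ (Fin d)) (hν : ‖ν‖ = 1) :
    ∫ z : EuclideanSpace ℝ (Fin d),
        (fderiv ℝ (fun y => fderiv ℝ (heatKE d w) y (EuclideanSpace.single ⟨0, hd⟩ 1)) z)
            (EuclideanSpace.single ⟨0, hd⟩ 1) * max ⟪ν, z⟫ 0
      = (ν ⟨0, hd⟩) ^ 2 / (2 * Real.sqrt (Real.pi * w)) := by
  classical
  set i0 : Fin d := ⟨0, hd⟩ with hi0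
  set e : EuclideanSpace ℝ (Fin d) := EuclideanSpace.single i0 1 with he_def
  have he : ‖e‖ = 1 := by rw [he_def, EuclideanSpace.norm_single]; norm_num
  have hrw : (fun z : EuclideanSpace ℝ (Fin d) =>
      (fderiv ℝ (fun y => fderiv ℝ (heatKE d w) y e) z) e * max ⟪ν, z⟫ 0)
      = fun z => ((⟪z, e⟫ ^ 2 / (4 * w ^ 2) - 1 / (2 * w)) * heatKE d w z) * max ⟪ν, z⟫ 0 :=
    funext fun z => by rw [S13.fderiv2_heatKE d hw e z he]
  show (∫ z : EuclideanSpace ℝ (Fin d),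
      (fderiv ℝ (fun y => fderiv ℝ (heatKE d w) y e) z) e * max ⟪ν, z⟫ 0)
    = (ν i0) ^ 2 / (2 * Real.sqrt (Real.pi * w))
  rw [hrw]
  -- orthonormal basis with b i0 = ν
  obtain ⟨b, hb⟩ : ∃ b : OrthonormalBasis (Fin d) ℝ (EuclideanSpace ℝ (Fin d)), b i0 = ν := by
    have hcard : Module.finrank ℝ (EuclideanSpace ℝ (Fin d)) = Fintype.card (Fin d) := by
      simp [finrank_euclideanSpace]
    have horth : Orthonormal ℝ (({i0} : Set (Fin d)).restrict (fun _ : Fin d => ν)) := by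
      constructor
      · intro i; exact hν
      · intro i j hij
        exfalso
        apply hij
        rcases i with ⟨i, hi⟩; rcases j with ⟨j, hj⟩
        simp only [Set.mem_singleton_iff] at hi hj
        subst hi; subst hj; rfl
    obtain ⟨b, hball⟩ := horth.exists_orthonormalBasis_extension_of_card_eq hcard
    exact ⟨b, hball i0 rfl⟩
  set u : Fin d → ℝ := fun k => b.repr e k with hu_def
  have hu : ∑ k, u k ^ 2 = 1 := by
    have h : ⟪b.repr e, b.repr e⟫ = ⟪e, e⟫ := b.repr.inner_map_map e e
    rw [PiLp.inner_apply] at h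
    simp only [RCLike.inner_apply, conj_trivial] at h
    rw [real_inner_self_eq_norm_sq, he] at h
    calc ∑ k, u k ^ 2 = ∑ k, (b.repr e) k * (b.repr e) k := by
          refine Finset.sum_congr rfl fun k _ => ?_
          show u k ^ 2 = u k * u k
          ring
      _ = 1 := by rw [h]; norm_num
  have hui0 : u i0 = ν i0 := by
    show b.repr e i0 = ν i0
    rw [OrthonormalBasis.repr_apply_apply, hb, he_def, EuclideanSpace.inner_single_right]
    simp
  -- change of variables
  have mp1 := (b.measurePreserving_measurableEquiv).symm
  have mp2 := (EuclideanSpace.volume_preserving_symm_measurableEquiv_toLp (Fin d)).symm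
  rw [← mp1.integral_comp', ← mp2.integral_comp']
  have hcomp : (fun x : Fin d → ℝ =>
      ((⟪(b.measurableEquiv.symm ((MeasurableEquiv.toLp 2 (Fin d → ℝ)).symm.symm x)), e⟫ ^ 2
          / (4 * w ^ 2) - 1 / (2 * w))
        * heatKE d w (b.measurableEquiv.symm ((MeasurableEquiv.toLp 2 (Fin d → ℝ)).symm.symm x)))
        * max ⟪ν, (b.measurableEquiv.symm ((MeasurableEquiv.toLp 2 (Fin d → ℝ)).symm.symm x))⟫ 0)
      = fun x => ((∑ k, u k * x k) ^ 2 / (4 * w ^ 2) - 1 / (2 * w))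
          * ((∏ k, S13.g1 w (x k)) * max (x i0) 0) := by
    funext x
    set y : EuclideanSpace ℝ (Fin d) := (MeasurableEquiv.toLp 2 (Fin d → ℝ)).symm.symm x with hy
    have hyk : ∀ k, y k = x k := fun k => rfl
    have hz : b.measurableEquiv.symm y = b.repr.symm y := rfl
    rw [hz]
    set z : EuclideanSpace ℝ (Fin d) := b.repr.symm y with hzdef
    -- (i)
    have hinner1 : ⟪z, e⟫ = ∑ k, u k * x k := by
      have : ⟪z, e⟫ = ⟪b.repr z, b.repr e⟫ := (b.repr.inner_map_map z e).symm
      rw [this, hzdef, LinearIsometryEquiv.apply_symm_apply, PiLp.inner_apply]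
      simp only [RCLike.inner_apply, conj_trivial]
      exact Finset.sum_congr rfl fun k _ => by rw [hyk k, hu_def]
    -- (ii)
    have hinner2 : ⟪ν, z⟫ = x i0 := by
      have : ⟪ν, z⟫ = ⟪b.repr ν, b.repr z⟫ := (b.repr.inner_map_map ν z).symm
      rw [this, hzdef, LinearIsometryEquiv.apply_symm_apply, ← hb, OrthonormalBasis.repr_self,
        EuclideanSpace.inner_single_left]
      simp [hyk i0]
    -- (iii)
    have hheat : heatKE d w z = ∏ k, S13.g1 w (x k) := by
      have hnorm : ‖z‖ ^ 2 = ∑ k, x k ^ 2 := by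
        rw [← real_inner_self_eq_norm_sq]
        have : ⟪z, z⟫ = ⟪b.repr z, b.repr z⟫ := (b.repr.inner_map_map z z).symm
        rw [this, hzdef, LinearIsometryEquiv.apply_symm_apply, PiLp.inner_apply]
        simp only [RCLike.inner_apply, conj_trivial]
        exact Finset.sum_congr rfl fun k _ => by rw [hyk k]; ring
      unfold heatKE S13.g1
      rw [hnorm, Finset.prod_mul_distrib, Finset.prod_const, Finset.card_univ, Fintype.card_fin,
        S13.gA_pow hw d, ← Real.exp_sum]
      congr 1
      rw [← Finset.mul_sum]
      field_simp
    rw [hinner1, hinner2, hheat]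
    ring
  rw [hcomp, S13.pi_integral d i0 hw u hu, hui0, S13.gA_eq hw]
  ring
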